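/- Let g and h be Hermitian unitary complex n×n matrices that anticommute (gh = -hg), let a, b, θ be real numbers, and let U = exp(θ·gh/2). Then U is unitary and U(ag + bh)U⁻¹ = (a·cos θ + b·sin θ)·g + (b·cos θ − a·sin θ)·h. -/

import Mathlib

open Matrix

open NormedSpace in
/-- Auxiliary: matrix exponential of a real multiple of a matrix squaring to `-1`. -/
lemma exp_smul_sq_neg_one {n : Type*} [Fintype n] [DecidableEq n]
    (K : Matrix n n ℂ) (hK2 : K * K = -1) (t : ℝ) :
    exp ((t : ℂ) • K) = (Real.cos t : ℂ) • (1 : Matrix n n ℂ) + (Real.sin t : ℂ) • K := by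
  letI : SeminormedRing (Matrix n n ℂ) := Matrix.linftyOpSemiNormedRing
  letI : NormedRing (Matrix n n ℂ) := Matrix.linftyOpNormedRing
  letI : NormedAlgebra ℝ (Matrix n n ℂ) := Matrix.linftyOpNormedAlgebra
  set φ := Complex.liftAux K hK2 with hφ
  have hcont : Continuous φ := φ.toLinearMap.continuous_of_finiteDimensional
  have harg : (t : ℂ) • K = φ ((t : ℂ) * Complex.I) := by
    rw [← Complex.real_smul, _root_.map_smul, Complex.liftAux_apply_I, Complex.coe_smul]
  rw [harg, show exp (φ ((t : ℂ) * Complex.I)) = φ (exp ((t : ℂ) * Complex.I)) from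
      (map_exp φ hcont _).symm,
    ← Complex.exp_eq_exp_ℂ, Complex.exp_mul_I,
    ← Complex.ofReal_cos, ← Complex.ofReal_sin, map_add, _root_.map_mul, Complex.liftAux_apply_I]
  have hre : ∀ r : ℝ, φ ((r : ℝ) : ℂ) = (r : ℂ) • (1 : Matrix n n ℂ) := by
    intro r
    rw [show ((r:ℝ):ℂ) = algebraMap ℝ ℂ r from rfl, AlgHom.commutes,
      Algebra.algebraMap_eq_smul_one]
    exact (Complex.coe_smul r _).symm
  rw [hre, hre, smul_mul_assoc, one_mul]

/-- If `g` and `h` are Hermitian unitary complex `n × n` matrices that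
anticommute, `a b θ : ℝ`, and `U = exp (θ • g h / 2)`, then `U` is unitary and
`U (a g + b h) U⁻¹ = (a cos θ + b sin θ) g + (b cos θ − a sin θ) h`. -/
theorem stmt0 {n : Type*} [Fintype n] [DecidableEq n]
    (g h : Matrix n n ℂ)
    (hg_herm : gᴴ = g) (hh_herm : hᴴ = h)
    (hg_unit : gᴴ * g = 1 ∧ g * gᴴ = 1)
    (hh_unit : hᴴ * h = 1 ∧ h * hᴴ = 1)
    (hanti : g * h = -(h * g))
    (a b θ : ℝ)
    (U : Matrix n n ℂ)
    (hU : U = NormedSpace.exp (((θ / 2 : ℝ) : ℂ) • (g * h))) :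
    (Uᴴ * U = 1 ∧ U * Uᴴ = 1) ∧
      U * ((a : ℂ) • g + (b : ℂ) • h) * U⁻¹ =
        ((a * Real.cos θ + b * Real.sin θ : ℝ) : ℂ) • g +
          ((b * Real.cos θ - a * Real.sin θ : ℝ) : ℂ) • h := by
  have hg2 : g * g = 1 := by nth_rewrite 1 [← hg_herm]; exact hg_unit.1
  have hh2 : h * h = 1 := by nth_rewrite 1 [← hh_herm]; exact hh_unit.1
  have hgh : h * g = -(g * h) := by rw [hanti, neg_neg]
  have hK2 : (g * h) * (g * h) = -1 := by
    calc (g*h)*(g*h) = g*(h*g)*h := by noncomm_ring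
    _ = g*(-(g*h))*h := by rw [hgh]
    _ = -(g*g*(h*h)) := by noncomm_ring
    _ = -1 := by rw [hg2, hh2, mul_one]
  have hKH : (g * h)ᴴ = -(g * h) := by
    rw [conjTranspose_mul, hg_herm, hh_herm, hgh]
  -- right-associated rewriting rules
  have l1 : ∀ x : Matrix n n ℂ, g * (g * x) = x := by
    intro x; rw [← mul_assoc, hg2, one_mul]
  have l2 : ∀ x : Matrix n n ℂ, h * (h * x) = x := by
    intro x; rw [← mul_assoc, hh2, one_mul]
  have l3 : ∀ x : Matrix n n ℂ, h * (g * x) = -(g * (h * x)) := by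
    intro x; rw [← mul_assoc, ← mul_assoc, hgh, neg_mul]
  have hUeq : U = (Real.cos (θ/2) : ℂ) • (1 : Matrix n n ℂ) + (Real.sin (θ/2) : ℂ) • (g * h) := by
    rw [hU]; exact exp_smul_sq_neg_one (g * h) hK2 (θ/2)
  set c : ℂ := (Real.cos (θ/2) : ℂ) with hc
  set s : ℂ := (Real.sin (θ/2) : ℂ) with hs
  have hcs : c ^ 2 + s ^ 2 = 1 := by
    rw [hc, hs]; norm_cast; exact Real.cos_sq_add_sin_sq (θ/2)
  have hUH : Uᴴ = c • (1 : Matrix n n ℂ) + (-s) • (g * h) := by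
    have hstarc : star c = c := by rw [hc]; exact Complex.conj_ofReal _
    have hstars : star s = s := by rw [hs]; exact Complex.conj_ofReal _
    rw [hUeq, conjTranspose_add, conjTranspose_smul, conjTranspose_smul, conjTranspose_one,
      hKH, hstarc, hstars, smul_neg, ← neg_smul]
  have h1 : Uᴴ * U = 1 := by
    rw [hUH, hUeq]
    simp only [add_mul, mul_add, smul_add, smul_sub, smul_mul_assoc, mul_smul_comm, one_mul,
      mul_one, hK2, smul_smul, smul_neg, neg_smul, neg_neg, neg_mul, mul_neg, neg_add_rev]
    match_scalars <;> first | ring1 | linear_combination hcs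
  have h2 : U * Uᴴ = 1 := by
    rw [hUH, hUeq]
    simp only [add_mul, mul_add, smul_add, smul_sub, smul_mul_assoc, mul_smul_comm, one_mul,
      mul_one, hK2, smul_smul, smul_neg, neg_smul, neg_neg, neg_mul, mul_neg, neg_add_rev]
    match_scalars <;> first | ring1 | linear_combination hcs
  have hinv : U⁻¹ = Uᴴ := inv_eq_left_inv h1
  refine ⟨⟨h1, h2⟩, ?_⟩
  have hcos : ((Real.cos θ : ℝ) : ℂ) = c ^ 2 - s ^ 2 := by
    rw [hc, hs, show θ = 2 * (θ/2) by ring, Real.cos_two_mul']; push_cast; ring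
  have hsin : ((Real.sin θ : ℝ) : ℂ) = 2 * s * c := by
    rw [hc, hs, show θ = 2 * (θ/2) by ring, Real.sin_two_mul]; push_cast; ring
  rw [hinv, hUH, hUeq,
    show ((a * Real.cos θ + b * Real.sin θ : ℝ) : ℂ)
        = (a : ℂ) * (c ^ 2 - s ^ 2) + (b : ℂ) * (2 * s * c) by push_cast [← hcos, ← hsin]; ring,
    show ((b * Real.cos θ - a * Real.sin θ : ℝ) : ℂ)
        = (b : ℂ) * (c ^ 2 - s ^ 2) - (a : ℂ) * (2 * s * c) by push_cast [← hcos, ← hsin]; ring]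
  simp only [add_mul, mul_add, smul_add, smul_sub, smul_mul_assoc, mul_smul_comm, one_mul,
    mul_one, mul_assoc, l1, l2, l3, hgh, hg2, hh2, hK2, neg_mul, smul_smul, smul_neg, neg_smul,
    neg_neg, mul_neg, neg_add_rev]
  match_scalars <;> ring
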